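/- (One-step error recursion for Algorithm 1) Let x⁻_{k+1} = x_k − δ·(|∇_t f(x_k,t_k)|/‖∇_x f(x_k,t_k)‖²)·∇_x f(x_k,t_k) if ‖∇_x f(x_k,t_k)‖ ≥ ε and x⁻_{k+1} = x_k otherwise, followed by the update x_{k+1} = x⁻_{k+1} − α·∇_x f(x⁻_{k+1}, t_{k+1}) with 0 < α ≤ 1/(2M). Then f(x_{k+1},t_{k+1}) − f*(t_{k+1}) ≤ (1 − 2καm)·max(γδ², μδ) + (1 − 2καm)·(f(x_k,t_k) − f*(t_k)) + (1 − 2καm)·ψ, where κ = 1 − αM/2, γ = 2K1/δ + (M/(2ε²))K1² + K3/2 + K1K2/ε, μ = K1 + (δ/2)K3, and ψ = δ(K1 + (δ/2)K3) + (K2²δ²/(2m))(Mδ/m + 2). -/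

import Mathlib

open RealInnerProductSpace

section AuxLemmas

variable {E : Type*} [NormedAddCommGroup E] [InnerProductSpace ℝ E] [CompleteSpace E]

/-- If `h` has nonpositive derivative on `[a,b]`, then `h b ≤ h a`. -/
lemma aux_deriv_nonpos_le {h h' : ℝ → ℝ} {a b : ℝ} (hab : a ≤ b)
    (hd : ∀ s ∈ Set.Icc a b, HasDerivAt h (h' s) s)
    (hle : ∀ s ∈ Set.Icc a b, h' s ≤ 0) : h b ≤ h a := by
  have hanti : AntitoneOn h (Set.Icc a b) := by
    apply antitoneOn_of_deriv_nonpos (convex_Icc a b)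
    · exact fun s hs => (hd s hs).continuousAt.continuousWithinAt
    · intro s hs
      rw [interior_Icc] at hs
      exact ((hd s (Set.Ioo_subset_Icc_self hs)).differentiableAt).differentiableWithinAt
    · intro s hs
      rw [interior_Icc] at hs
      rw [(hd s (Set.Ioo_subset_Icc_self hs)).deriv]
      exact hle s (Set.Ioo_subset_Icc_self hs)
  exact hanti (Set.left_mem_Icc.2 hab) (Set.right_mem_Icc.2 hab) hab

/-- Derivative of a scalar function along a line, via the gradient. -/
lemma aux_line_hasDerivAt (f : E → ℝ) (g : E → E)
    (hg : ∀ y : E, HasGradientAt f (g y) y) (x v : E) (s : ℝ) :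
    HasDerivAt (fun s : ℝ => f (x + s • v)) ⟪g (x + s • v), v⟫ s := by
  have hline : HasDerivAt (fun s : ℝ => x + s • v) v s := by
    simpa using ((hasDerivAt_id s).smul_const v).const_add x
  have hF := (hg (x + s • v)).hasFDerivAt
  have := hF.comp_hasDerivAt s hline
  simpa [InnerProductSpace.toDual_apply_apply, Function.comp_def] using this

/-- Descent lemma from a Lipschitz gradient. -/
lemma aux_descent (f : E → ℝ) (g : E → E) (M : ℝ)
    (hg : ∀ y : E, HasGradientAt f (g y) y)
    (hLip : ∀ x y : E, ‖g x - g y‖ ≤ M * ‖x - y‖) (x v : E) :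
    f (x + v) ≤ f x + ⟪g x, v⟫ + M / 2 * ‖v‖ ^ 2 := by
  set h : ℝ → ℝ := fun s => f (x + s • v) - s * ⟪g x, v⟫ - M / 2 * s ^ 2 * ‖v‖ ^ 2 with hh
  have key : h 1 ≤ h 0 := by
    apply aux_deriv_nonpos_le (a := 0) (b := 1) zero_le_one
      (h' := fun s => ⟪g (x + s • v), v⟫ - ⟪g x, v⟫ - M * s * ‖v‖ ^ 2)
    · intro s _
      have h1 := aux_line_hasDerivAt f g hg x v s
      have h2 : HasDerivAt (fun s : ℝ => s * ⟪g x, v⟫) ⟪g x, v⟫ s := by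
        simpa using (hasDerivAt_id s).mul_const ⟪g x, v⟫
      have h3 : HasDerivAt (fun s : ℝ => M / 2 * s ^ 2 * ‖v‖ ^ 2) (M * s * ‖v‖ ^ 2) s := by
        have : HasDerivAt (fun s : ℝ => s ^ 2) (2 * s) s := by
          simpa using hasDerivAt_pow 2 s
        have := (this.const_mul (M / 2)).mul_const (‖v‖ ^ 2)
        exact this.congr_deriv (by ring)
      simpa [hh, mul_comm, Pi.sub_def] using (h1.sub h2).sub h3
    · intro s hs
      have hinner : ⟪g (x + s • v) - g x, v⟫ ≤ M * s * ‖v‖ ^ 2 := by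
        calc ⟪g (x + s • v) - g x, v⟫ ≤ ‖g (x + s • v) - g x‖ * ‖v‖ :=
              real_inner_le_norm _ _
          _ ≤ M * ‖(x + s • v) - x‖ * ‖v‖ := by
              have := hLip (x + s • v) x
              have hv : (0:ℝ) ≤ ‖v‖ := norm_nonneg v
              nlinarith [norm_nonneg (g (x + s • v) - g x)]
          _ = M * (|s| * ‖v‖) * ‖v‖ := by
              simp [norm_smul, abs_of_nonneg hs.1]
          _ = M * s * ‖v‖ ^ 2 := by
              rw [abs_of_nonneg hs.1]; ring
      have : ⟪g (x + s • v), v⟫ - ⟪g x, v⟫ = ⟪g (x + s • v) - g x, v⟫ := by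
        rw [inner_sub_left]
      linarith
  have h0 : h 0 = f x := by simp [hh]
  have h1 : h 1 = f (x + v) - ⟪g x, v⟫ - M / 2 * ‖v‖ ^ 2 := by simp [hh]
  rw [h0, h1] at key
  linarith

/-- Lower bound from strong monotonicity of the gradient. -/
lemma aux_lower (f : E → ℝ) (g : E → E) (m : ℝ)
    (hg : ∀ y : E, HasGradientAt f (g y) y)
    (hsc : ∀ x y : E, m * ‖x - y‖ ^ 2 ≤ ⟪g x - g y, x - y⟫) (x v : E) :
    f x + ⟪g x, v⟫ + m / 2 * ‖v‖ ^ 2 ≤ f (x + v) := by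
  set h : ℝ → ℝ := fun s => s * ⟪g x, v⟫ + m / 2 * s ^ 2 * ‖v‖ ^ 2 - f (x + s • v) with hh
  have key : h 1 ≤ h 0 := by
    apply aux_deriv_nonpos_le (a := 0) (b := 1) zero_le_one
      (h' := fun s => ⟪g x, v⟫ + m * s * ‖v‖ ^ 2 - ⟪g (x + s • v), v⟫)
    · intro s _
      have h1 := aux_line_hasDerivAt f g hg x v s
      have h2 : HasDerivAt (fun s : ℝ => s * ⟪g x, v⟫) ⟪g x, v⟫ s := by
        simpa using (hasDerivAt_id s).mul_const ⟪g x, v⟫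
      have h3 : HasDerivAt (fun s : ℝ => m / 2 * s ^ 2 * ‖v‖ ^ 2) (m * s * ‖v‖ ^ 2) s := by
        have : HasDerivAt (fun s : ℝ => s ^ 2) (2 * s) s := by
          simpa using hasDerivAt_pow 2 s
        have := (this.const_mul (m / 2)).mul_const (‖v‖ ^ 2)
        exact this.congr_deriv (by ring)
      simpa [hh, Pi.sub_def, Pi.add_def] using (h2.add h3).sub h1
    · intro s hs
      have hinner : m * s ^ 2 * ‖v‖ ^ 2 ≤ ⟪g (x + s • v) - g x, s • v⟫ := by
        have := hsc (x + s • v) x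
        have heq : (x + s • v) - x = s • v := by abel
        rw [heq] at this
        have : m * ‖s • v‖ ^ 2 ≤ ⟪g (x + s • v) - g x, s • v⟫ := this
        calc m * s ^ 2 * ‖v‖ ^ 2 = m * ‖s • v‖ ^ 2 := by
              rw [norm_smul]; simp [mul_pow, sq_abs]; ring
          _ ≤ _ := this
      rcases eq_or_lt_of_le hs.1 with hs0 | hs0
      · simp [← hs0]
      · have hinner' : m * s * ‖v‖ ^ 2 ≤ ⟪g (x + s • v) - g x, v⟫ := by
          rw [real_inner_smul_right] at hinner
          have := (mul_le_mul_iff_right₀ hs0).1 (by nlinarith : s * (m * s * ‖v‖ ^ 2) ≤ s * ⟪g (x + s • v) - g x, v⟫)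
          linarith [this]
        have : ⟪g (x + s • v), v⟫ - ⟪g x, v⟫ = ⟪g (x + s • v) - g x, v⟫ := by
          rw [inner_sub_left]
        linarith
  have h0 : h 0 = -f x := by simp [hh]
  have h1 : h 1 = ⟪g x, v⟫ + m / 2 * ‖v‖ ^ 2 - f (x + v) := by simp [hh]
  rw [h0, h1] at key
  linarith

/-- Polyak–Łojasiewicz-type bound: value gap to ANY point. -/
lemma aux_pl (f : E → ℝ) (g : E → E) (m : ℝ) (hm : 0 < m)
    (hg : ∀ y : E, HasGradientAt f (g y) y)
    (hsc : ∀ x y : E, m * ‖x - y‖ ^ 2 ≤ ⟪g x - g y, x - y⟫) (x z : E) :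
    f x - f z ≤ ‖g x‖ ^ 2 / (2 * m) := by
  have h := aux_lower f g m hg hsc x (z - x)
  rw [add_sub_cancel] at h
  have h0 : (0:ℝ) ≤ ‖g x + m • (z - x)‖ ^ 2 := sq_nonneg _
  have hexp : ‖g x + m • (z - x)‖ ^ 2
      = ‖g x‖ ^ 2 + 2 * (m * ⟪g x, z - x⟫) + m ^ 2 * ‖z - x‖ ^ 2 := by
    rw [← real_inner_self_eq_norm_sq, real_inner_add_add_self,
      real_inner_smul_right, real_inner_smul_left, real_inner_smul_right,
      real_inner_self_eq_norm_sq, real_inner_self_eq_norm_sq]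
    ring
  rw [hexp] at h0
  rw [le_div_iff₀ (by positivity : (0:ℝ) < 2 * m)]
  have h2 : f x - f z ≤ -⟪g x, z - x⟫ - m / 2 * ‖z - x‖ ^ 2 := by linarith
  have h3 := mul_le_mul_of_nonneg_right h2 (by positivity : (0:ℝ) ≤ 2 * m)
  nlinarith [h3, h0]

/-- Lipschitz-in-time bound from a bounded time derivative. -/
lemma aux_time_lip (φ φ' : ℝ → ℝ) (K t δ : ℝ) (ht : 0 ≤ t) (hδ : 0 ≤ δ)
    (hd : ∀ s : ℝ, 0 ≤ s → HasDerivAt φ (φ' s) s)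
    (hK : ∀ s : ℝ, 0 ≤ s → |φ' s| ≤ K) :
    |φ (t + δ) - φ t| ≤ K * δ := by
  have hmem : ∀ s ∈ Set.Icc t (t + δ), 0 ≤ s := fun s hs => le_trans ht hs.1
  have h1 : φ (t + δ) - φ t ≤ K * δ := by
    have key : φ (t + δ) - K * (t + δ) ≤ φ t - K * t := by
      refine aux_deriv_nonpos_le (h := fun s => φ s - K * s)
        (h' := fun s => φ' s - K) (a := t) (b := t + δ) (by linarith) ?_ ?_
      · intro s hs
        simpa [Pi.sub_def] using (hd s (hmem s hs)).sub ((hasDerivAt_id s).const_mul K)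
      · intro s hs
        show φ' s - K ≤ 0
        have := abs_le.1 (hK s (hmem s hs))
        linarith [this.2]
    linarith
  have h2 : φ t - φ (t + δ) ≤ K * δ := by
    have key : -φ (t + δ) - K * (t + δ) ≤ -φ t - K * t := by
      refine aux_deriv_nonpos_le (h := fun s => -φ s - K * s)
        (h' := fun s => -φ' s - K) (a := t) (b := t + δ) (by linarith) ?_ ?_
      · intro s hs
        simpa [Pi.sub_def, Pi.neg_def] using ((hd s (hmem s hs)).neg).sub ((hasDerivAt_id s).const_mul K)
      · intro s hs
        show -φ' s - K ≤ 0
        have := abs_le.1 (hK s (hmem s hs))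
        linarith [this.1]
    linarith
  rw [abs_le]
  constructor <;> linarith

end AuxLemmas

set_option maxHeartbeats 1000000 in
/-- one-step error recursion for Algorithm 1: with the prediction
step of Algorithm 1 followed by the gradient update with `0 < α ≤ 1/(2M)`,
`f(x_{k+1},t_{k+1}) − f*(t_{k+1}) ≤ (1−2καm)·max(γδ², μδ)
  + (1−2καm)(f(x_k,t_k) − f*(t_k)) + (1−2καm)·ψ`. -/
theorem alg1_one_step_recursion
    {E : Type*} [NormedAddCommGroup E] [InnerProductSpace ℝ E] [CompleteSpace E]
    (f : E → ℝ → ℝ) (gx : E → ℝ → E) (ft : E → ℝ → ℝ)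
    (fxt : E → ℝ → E) (ftt : E → ℝ → ℝ) (xstar : ℝ → E)
    (m M K1 K2 K3 : ℝ) (hm : 0 < m) (hmM : m ≤ M)
    (hgrad : ∀ (x : E) (t : ℝ), 0 ≤ t → HasGradientAt (fun y => f y t) (gx x t) x)
    (hft : ∀ (x : E) (t : ℝ), 0 ≤ t → HasDerivAt (fun s => f x s) (ft x t) t)
    (hfxt : ∀ (x : E) (t : ℝ), 0 ≤ t → HasDerivAt (fun s => gx x s) (fxt x t) t)
    (hftt : ∀ (x : E) (t : ℝ), 0 ≤ t → HasDerivAt (fun s => ft x s) (ftt x t) t)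
    (hsc : ∀ (t : ℝ), 0 ≤ t → ∀ x y : E, m * ‖x - y‖ ^ 2 ≤ ⟪gx x t - gx y t, x - y⟫)
    (hLip : ∀ (t : ℝ), 0 ≤ t → ∀ x y : E, ‖gx x t - gx y t‖ ≤ M * ‖x - y‖)
    (hK1 : ∀ (x : E) (t : ℝ), 0 ≤ t → |ft x t| ≤ K1)
    (hK2 : ∀ (x : E) (t : ℝ), 0 ≤ t → ‖fxt x t‖ ≤ K2)
    (hK3 : ∀ (x : E) (t : ℝ), 0 ≤ t → |ftt x t| ≤ K3)
    (hmin : ∀ (t : ℝ), 0 ≤ t → IsMinOn (fun y => f y t) Set.univ (xstar t))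
    (xk : E) (tk δ ε α : ℝ) (htk : 0 ≤ tk) (hδ : 0 < δ) (hε : 0 < ε)
    (hα : 0 < α) (hαM : α ≤ 1 / (2 * M))
    (xminus xnext : E)
    (hxminus : xminus =
      if ε ≤ ‖gx xk tk‖ then
        xk - (δ * |ft xk tk| / ‖gx xk tk‖ ^ 2) • gx xk tk
      else xk)
    (hxnext : xnext = xminus - α • gx xminus (tk + δ))
    (κ γ μ ψ : ℝ)
    (hκ : κ = 1 - α * M / 2)
    (hγ : γ = 2 * K1 / δ + M / (2 * ε ^ 2) * K1 ^ 2 + K3 / 2 + K1 * K2 / ε)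
    (hμ : μ = K1 + δ / 2 * K3)
    (hψ : ψ = δ * (K1 + δ / 2 * K3) + K2 ^ 2 * δ ^ 2 / (2 * m) * (M * δ / m + 2)) :
    f xnext (tk + δ) - f (xstar (tk + δ)) (tk + δ) ≤
      (1 - 2 * κ * α * m) * max (γ * δ ^ 2) (μ * δ)
        + (1 - 2 * κ * α * m) * (f xk tk - f (xstar tk) tk)
        + (1 - 2 * κ * α * m) * ψ := by
  have hM : 0 < M := lt_of_lt_of_le hm hmM
  have ht' : (0:ℝ) ≤ tk + δ := by linarith
  have hK1nn : 0 ≤ K1 := le_trans (abs_nonneg _) (hK1 xk tk htk)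
  have hK2nn : 0 ≤ K2 := le_trans (norm_nonneg _) (hK2 xk tk htk)
  have hK3nn : 0 ≤ K3 := le_trans (abs_nonneg _) (hK3 xk tk htk)
  have hκpos : 0 < κ := by
    rw [hκ]
    have : α * M ≤ 1 / 2 := by
      rw [le_div_iff₀ (by positivity : (0:ℝ) < 2 * M)] at hαM
      nlinarith
    linarith
  have hρnn : 0 ≤ 1 - 2 * κ * α * m := by
    rw [hκ]
    have hαm : α * m ≤ α * M := by nlinarith
    rw [le_div_iff₀ (by positivity : (0:ℝ) < 2 * M)] at hαM
    nlinarith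
  -- Step 1: descent of the gradient step at time tk + δ
  have hstep1 : f xnext (tk + δ) - f (xstar (tk + δ)) (tk + δ)
      ≤ (1 - 2 * κ * α * m) * (f xminus (tk + δ) - f (xstar (tk + δ)) (tk + δ)) := by
    have hdesc := aux_descent (fun y => f y (tk + δ)) (fun y => gx y (tk + δ)) M
      (fun y => hgrad y (tk + δ) ht') (fun x y => hLip (tk + δ) ht' x y) xminus
      (-(α • gx xminus (tk + δ)))
    have hxeq : xminus + -(α • gx xminus (tk + δ)) = xnext := by rw [hxnext]; abel
    rw [hxeq] at hdesc
    have hin : ⟪gx xminus (tk + δ), -(α • gx xminus (tk + δ))⟫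
        = -(α * ‖gx xminus (tk + δ)‖ ^ 2) := by
      rw [inner_neg_right, real_inner_smul_right, real_inner_self_eq_norm_sq]
    have hnrm : ‖-(α • gx xminus (tk + δ))‖ ^ 2 = α ^ 2 * ‖gx xminus (tk + δ)‖ ^ 2 := by
      rw [norm_neg, norm_smul]
      simp [mul_pow, sq_abs]
    rw [hin, hnrm] at hdesc
    have hd2 : f xnext (tk + δ)
        ≤ f xminus (tk + δ) - α * κ * ‖gx xminus (tk + δ)‖ ^ 2 := by
      have heq : f xminus (tk + δ) + -(α * ‖gx xminus (tk + δ)‖ ^ 2)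
            + M / 2 * (α ^ 2 * ‖gx xminus (tk + δ)‖ ^ 2)
          = f xminus (tk + δ) - α * (1 - α * M / 2) * ‖gx xminus (tk + δ)‖ ^ 2 := by ring
      rw [hκ]
      linarith [hdesc, heq.le, heq.ge]
    have hpl := aux_pl (fun y => f y (tk + δ)) (fun y => gx y (tk + δ)) m hm
      (fun y => hgrad y (tk + δ) ht') (fun x y => hsc (tk + δ) ht' x y) xminus
      (xstar (tk + δ))
    have hpl' : 2 * m * (f xminus (tk + δ) - f (xstar (tk + δ)) (tk + δ))
        ≤ ‖gx xminus (tk + δ)‖ ^ 2 := by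
      rw [le_div_iff₀ (by positivity : (0:ℝ) < 2 * m)] at hpl
      linarith [hpl]
    have hακ : 0 ≤ α * κ := le_of_lt (mul_pos hα hκpos)
    have h4 := mul_le_mul_of_nonneg_left hpl' hακ
    linarith [hd2, h4]
  -- Step 2a: f xminus (tk+δ) ≤ f xk tk + max(γδ², μδ)
  have hstep2 : f xminus (tk + δ) ≤ f xk tk + max (γ * δ ^ 2) (μ * δ) := by
    by_cases hcase : ε ≤ ‖gx xk tk‖
    · -- prediction step taken
      have hgpos : 0 < ‖gx xk tk‖ := lt_of_lt_of_le hε hcase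
      have hg2 : (0:ℝ) < ‖gx xk tk‖ ^ 2 := by positivity
      have hgne : ‖gx xk tk‖ ^ 2 ≠ 0 := ne_of_gt hg2
      obtain ⟨c, hc⟩ : ∃ c : ℝ, c = δ * |ft xk tk| / ‖gx xk tk‖ ^ 2 := ⟨_, rfl⟩
      have hxm : xminus = xk + -(c • gx xk tk) := by
        rw [hxminus, if_pos hcase, hc]; abel
      have hdesc := aux_descent (fun y => f y tk) (fun y => gx y tk) M
        (fun y => hgrad y tk htk) (fun x y => hLip tk htk x y) xk (-(c • gx xk tk))
      rw [← hxm] at hdesc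
      have hin : ⟪gx xk tk, -(c • gx xk tk)⟫ = -(c * ‖gx xk tk‖ ^ 2) := by
        rw [inner_neg_right, real_inner_smul_right, real_inner_self_eq_norm_sq]
      have hnrm : ‖-(c • gx xk tk)‖ ^ 2 = c ^ 2 * ‖gx xk tk‖ ^ 2 := by
        rw [norm_neg, norm_smul]
        simp [mul_pow, sq_abs]
      rw [hin, hnrm] at hdesc
      have hcg : c * ‖gx xk tk‖ ^ 2 = δ * |ft xk tk| := by
        rw [hc]; field_simp
      have hc2g : c ^ 2 * ‖gx xk tk‖ ^ 2 = δ ^ 2 * |ft xk tk| ^ 2 / ‖gx xk tk‖ ^ 2 := by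
        rw [hc, div_pow, mul_pow, sq_abs]; field_simp
      have hbound : δ ^ 2 * |ft xk tk| ^ 2 / ‖gx xk tk‖ ^ 2 ≤ δ ^ 2 * K1 ^ 2 / ε ^ 2 := by
        have h1 : |ft xk tk| ^ 2 ≤ K1 ^ 2 := by
          have := hK1 xk tk htk
          nlinarith [abs_nonneg (ft xk tk)]
        have h2 : ε ^ 2 ≤ ‖gx xk tk‖ ^ 2 := by nlinarith
        have h3 : |ft xk tk| ^ 2 * ε ^ 2 ≤ K1 ^ 2 * ‖gx xk tk‖ ^ 2 :=
          mul_le_mul h1 h2 (by positivity) (by positivity)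
        have h4 := mul_le_mul_of_nonneg_left h3 (sq_nonneg δ)
        rw [div_le_div_iff₀ hg2 (by positivity : (0:ℝ) < ε ^ 2)]
        linarith [h4]
      have hspace : f xminus tk ≤ f xk tk + M / 2 * (δ ^ 2 * K1 ^ 2 / ε ^ 2) := by
        rw [hcg, hc2g] at hdesc
        have hft0 : -(δ * |ft xk tk|) ≤ 0 := by
          have := abs_nonneg (ft xk tk); nlinarith
        have h5 := mul_le_mul_of_nonneg_left hbound (by positivity : (0:ℝ) ≤ M / 2)
        linarith [hdesc, h5, hft0]
      have htime := aux_time_lip (fun s => f xminus s) (fun s => ft xminus s) K1 tk δ htk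
        (le_of_lt hδ) (fun s hs => hft xminus s hs) (fun s hs => hK1 xminus s hs)
      have htime' : f xminus (tk + δ) - f xminus tk ≤ K1 * δ := (abs_le.1 htime).2
      have hγδ : M / 2 * (δ ^ 2 * K1 ^ 2 / ε ^ 2) + K1 * δ ≤ γ * δ ^ 2 := by
        rw [hγ]
        have e1 : (2 * K1 / δ + M / (2 * ε ^ 2) * K1 ^ 2 + K3 / 2 + K1 * K2 / ε) * δ ^ 2
            = 2 * K1 * δ + M / 2 * (δ ^ 2 * K1 ^ 2 / ε ^ 2) + K3 / 2 * δ ^ 2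
              + K1 * K2 / ε * δ ^ 2 := by
          field_simp
        rw [e1]
        have h6 : 0 ≤ K1 * K2 / ε * δ ^ 2 := by positivity
        have h7 : 0 ≤ K3 / 2 * δ ^ 2 := by positivity
        have h8 : 0 ≤ K1 * δ := by positivity
        linarith [h6, h7, h8]
      have hmx := le_max_left (γ * δ ^ 2) (μ * δ)
      linarith [htime', hspace, hγδ, hmx]
    · -- no prediction step
      have hxm : xminus = xk := by rw [hxminus, if_neg hcase]
      have htime := aux_time_lip (fun s => f xk s) (fun s => ft xk s) K1 tk δ htk
        (le_of_lt hδ) (fun s hs => hft xk s hs) (fun s hs => hK1 xk s hs)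
      have htime' : f xk (tk + δ) - f xk tk ≤ K1 * δ := (abs_le.1 htime).2
      have hμδ : K1 * δ ≤ μ * δ := by
        rw [hμ]; nlinarith
      rw [hxm]
      have hmx := le_max_right (γ * δ ^ 2) (μ * δ)
      linarith [htime', hμδ, hmx]
  -- Step 2b: f* tk - f* (tk+δ) ≤ ψ
  have hstep3 : f (xstar tk) tk - f (xstar (tk + δ)) (tk + δ) ≤ ψ := by
    have htime := aux_time_lip (fun s => f (xstar (tk + δ)) s)
      (fun s => ft (xstar (tk + δ)) s) K1 tk δ htk
      (le_of_lt hδ) (fun s hs => hft (xstar (tk + δ)) s hs)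
      (fun s hs => hK1 (xstar (tk + δ)) s hs)
    have htime' : f (xstar (tk + δ)) tk - f (xstar (tk + δ)) (tk + δ) ≤ K1 * δ := by
      have := (abs_le.1 htime).1; linarith
    have hmin' : f (xstar tk) tk ≤ f (xstar (tk + δ)) tk := hmin tk htk (Set.mem_univ _)
    have hψnn : K1 * δ ≤ ψ := by
      rw [hψ]
      have h1 : 0 ≤ K2 ^ 2 * δ ^ 2 / (2 * m) * (M * δ / m + 2) := by positivity
      nlinarith
    linarith [htime', hmin', hψnn]
  -- combine
  have hA : f xminus (tk + δ) - f (xstar (tk + δ)) (tk + δ)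
      ≤ max (γ * δ ^ 2) (μ * δ) + (f xk tk - f (xstar tk) tk) + ψ := by
    linarith [hstep2, hstep3]
  calc f xnext (tk + δ) - f (xstar (tk + δ)) (tk + δ)
      ≤ (1 - 2 * κ * α * m) * (f xminus (tk + δ) - f (xstar (tk + δ)) (tk + δ)) := hstep1
    _ ≤ (1 - 2 * κ * α * m)
        * (max (γ * δ ^ 2) (μ * δ) + (f xk tk - f (xstar tk) tk) + ψ) :=
        mul_le_mul_of_nonneg_left hA hρnn
    _ = (1 - 2 * κ * α * m) * max (γ * δ ^ 2) (μ * δ)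
        + (1 - 2 * κ * α * m) * (f xk tk - f (xstar tk) tk)
        + (1 - 2 * κ * α * m) * ψ := by ring
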